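/- (Derivative of the closed-form expected number of jumps; first display in the proof of Theorem 2.7.) Let Q be an h×h generator matrix, fix times t_1 < t_2 < … < t_n, states y_1,…,y_n in {1,…,h} with (exp((t_{s+1}−t_s)·Q))_{y_s y_{s+1}} > 0 for all s, indices μ ≠ ν and α ≠ β, and set D = E_{αβ} − E_{αα}. For an h×h matrix M with off-diagonal entries m_{μν}, write C_γ^{(μν)}(M) = [[M, m_{μν}·E_{μν}],[0, M]], C_η^{(αβ)}(Q) = [[Q, D],[0, Q]], and C_ψ = [[C_γ^{(μν)}(Q), D_γ],[0, C_γ^{(μν)}(Q)]] where D_γ = [[D, δ_{μα}δ_{νβ}·E_{μν}],[0, D]]. Then the map s ↦ ∑_{s'=1}^{n−1} (exp(Δ_{s'}·(Q+s·D)))_{y_{s'} y_{s'+1}}^{−1} · (exp(Δ_{s'}·C_γ^{(μν)}(Q+s·D)))_{y_{s'}, h+y_{s'+1}}, with Δ_{s'} = t_{s'+1}−t_{s'}, has derivative at s = 0 equal to ∑_{s'=1}^{n−1} [ −(exp(Δ_{s'}Q))_{y_{s'} y_{s'+1}}^{−2} · (exp(Δ_{s'}·C_η^{(αβ)}(Q)))_{y_{s'},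 h+y_{s'+1}} · (exp(Δ_{s'}·C_γ^{(μν)}(Q)))_{y_{s'}, h+y_{s'+1}} + (exp(Δ_{s'}Q))_{y_{s'} y_{s'+1}}^{−1} · (exp(Δ_{s'}·C_ψ))_{y_{s'}, 3h+y_{s'+1}} ]. -/

import Mathlib

set_option autoImplicit false

open Matrix

/-- The matrix exponential of a real square matrix. -/
noncomputable def mexp {n : Type*} [Fintype n] [DecidableEq n] (A : Matrix n n ℝ) :
    Matrix n n ℝ :=
  NormedSpace.exp A

/-- `Q` is a generator matrix: off-diagonal entries nonnegative, diagonal entries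
nonpositive, rows summing to zero. -/
def IsGenerator {h : ℕ} (Q : Matrix (Fin h) (Fin h) ℝ) : Prop :=
  (∀ i j, i ≠ j → 0 ≤ Q i j) ∧ (∀ i, Q i i ≤ 0) ∧ (∀ i, ∑ j, Q i j = 0)

/-- The perturbation direction `D = E_{αβ} − E_{αα}`. -/
noncomputable def Dmat {h : ℕ} (α β : Fin h) : Matrix (Fin h) (Fin h) ℝ :=
  Matrix.single α β 1 - Matrix.single α α 1

/-- `C_γ^{(μν)}(M) = [[M, m_{μν} • E_{μν}],[0, M]]`. -/
noncomputable def Cγ {h : ℕ} (μ ν : Fin h) (M : Matrix (Fin h) (Fin h) ℝ) :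
    Matrix (Fin h ⊕ Fin h) (Fin h ⊕ Fin h) ℝ :=
  Matrix.fromBlocks M (M μ ν • Matrix.single μ ν 1) 0 M

/-- `C_φ^{(μ)}(M) = [[M, E_{μμ}],[0, M]]`. -/
noncomputable def Cφ {h : ℕ} (μ : Fin h) (M : Matrix (Fin h) (Fin h) ℝ) :
    Matrix (Fin h ⊕ Fin h) (Fin h ⊕ Fin h) ℝ :=
  Matrix.fromBlocks M (Matrix.single μ μ 1) 0 M

/-- `C_η^{(αβ)}(Q) = [[Q, E_{αβ} − E_{αα}],[0, Q]]`. -/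
noncomputable def Cη {h : ℕ} (α β : Fin h) (Q : Matrix (Fin h) (Fin h) ℝ) :
    Matrix (Fin h ⊕ Fin h) (Fin h ⊕ Fin h) ℝ :=
  Matrix.fromBlocks Q (Dmat α β) 0 Q

/-- `D_γ = [[D, δ_{μα} δ_{νβ} • E_{μν}],[0, D]]`, the derivative of `C_γ^{(μν)}` in
direction `D = E_{αβ} − E_{αα}`. -/
noncomputable def Dγ {h : ℕ} (μ ν α β : Fin h) : Matrix (Fin h ⊕ Fin h) (Fin h ⊕ Fin h) ℝ :=
  Matrix.fromBlocks (Dmat α β)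
    (((if μ = α then (1:ℝ) else 0) * (if ν = β then (1:ℝ) else 0)) •
      Matrix.single μ ν (1:ℝ))
    0 (Dmat α β)

/-- `C_ψ = [[C_γ^{(μν)}(Q), D_γ],[0, C_γ^{(μν)}(Q)]]`. -/
noncomputable def Cψ {h : ℕ} (μ ν α β : Fin h) (Q : Matrix (Fin h) (Fin h) ℝ) :
    Matrix ((Fin h ⊕ Fin h) ⊕ (Fin h ⊕ Fin h)) ((Fin h ⊕ Fin h) ⊕ (Fin h ⊕ Fin h)) ℝ :=
  Matrix.fromBlocks (Cγ μ ν Q) (Dγ μ ν α β) 0 (Cγ μ ν Q)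

/-- `D_φ = [[D, 0],[0, D]]`. -/
noncomputable def Dφ {h : ℕ} (α β : Fin h) : Matrix (Fin h ⊕ Fin h) (Fin h ⊕ Fin h) ℝ :=
  Matrix.fromBlocks (Dmat α β) 0 0 (Dmat α β)

/-- `C_ω = [[C_φ^{(μ)}(Q), D_φ],[0, C_φ^{(μ)}(Q)]]`. -/
noncomputable def Cω {h : ℕ} (μ α β : Fin h) (Q : Matrix (Fin h) (Fin h) ℝ) :
    Matrix ((Fin h ⊕ Fin h) ⊕ (Fin h ⊕ Fin h)) ((Fin h ⊕ Fin h) ⊕ (Fin h ⊕ Fin h)) ℝ :=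
  Matrix.fromBlocks (Cφ μ Q) (Dφ α β) 0 (Cφ μ Q)

set_option maxHeartbeats 1000000

namespace ExpAux
open scoped Nat
section

attribute [local instance] Matrix.linftyOpSemiNormedRing Matrix.linftyOpNormedRing
  Matrix.linftyOpNormedAlgebra

variable {n : Type*} [Fintype n] [DecidableEq n]

lemma sum_pow_step (M B : Matrix n n ℝ) (k : ℕ) :
    (∑ i ∈ Finset.range k, M ^ i * B * M ^ (k - 1 - i)) * M + M ^ k * B
      = ∑ i ∈ Finset.range (k + 1), M ^ i * B * M ^ (k - i) := by
  rw [Finset.sum_range_succ, Finset.sum_mul]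
  congr 1
  · refine Finset.sum_congr rfl fun i hi => ?_
    rw [Finset.mem_range] at hi
    have h : k - 1 - i + 1 = k - i := by omega
    rw [mul_assoc, ← pow_succ, h]
  · simp

lemma fromBlocks_pow (A B : Matrix n n ℝ) (k : ℕ) :
    (Matrix.fromBlocks A B 0 A) ^ k
      = Matrix.fromBlocks (A ^ k) (∑ i ∈ Finset.range k, A ^ i * B * A ^ (k - 1 - i)) 0
          (A ^ k) := by
  induction k with
  | zero => simp [Matrix.fromBlocks_one]
  | succ k ih =>
    rw [pow_succ, ih, Matrix.fromBlocks_multiply]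
    simp only [Matrix.mul_zero, Matrix.zero_mul, add_zero, zero_add, ← pow_succ,
      Nat.add_sub_cancel]
    rw [← sum_pow_step A B k, add_comm ((∑ i ∈ Finset.range k, A ^ i * B * A ^ (k - 1 - i)) * A)]

lemma norm_entry_le (M : Matrix n n ℝ) (i j : n) : ‖M i j‖ ≤ ‖M‖ := by
  have h : ‖M i j‖₊ ≤ ‖M‖₊ := by
    rw [Matrix.linfty_opNNNorm_def]
    have h1 : ‖M i j‖₊ ≤ ∑ j' : n, ‖M i j'‖₊ :=
      Finset.single_le_sum (f := fun j' => ‖M i j'‖₊) (fun _ _ => zero_le) (Finset.mem_univ j)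
    exact h1.trans (Finset.le_sup (f := fun i => ∑ j' : n, ‖M i j'‖₊) (Finset.mem_univ i))
  exact_mod_cast h

lemma norm_one_le : ‖(1 : Matrix n n ℝ)‖ ≤ 1 := by
  rw [← Matrix.diagonal_one, Matrix.linfty_opNorm_diagonal]
  exact (pi_norm_le_iff_of_nonneg zero_le_one).2 fun _ => by simp

lemma norm_pow_le (M : Matrix n n ℝ) : ∀ k, ‖M ^ k‖ ≤ ‖M‖ ^ k
  | 0 => by simpa using norm_one_le
  | (k + 1) => by
    rw [pow_succ, pow_succ]
    exact (norm_mul_le _ _).trans (mul_le_mul_of_nonneg_right (norm_pow_le M k) (norm_nonneg M))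

noncomputable def entryCLM (i j : n) : Matrix n n ℝ →L[ℝ] ℝ :=
  LinearMap.mkContinuous
    { toFun := fun M => M i j
      map_add' := fun _ _ => rfl
      map_smul' := fun _ _ => rfl }
    1 (fun M => by rw [one_mul]; exact norm_entry_le M i j)

@[simp] lemma entryCLM_apply (i j : n) (M : Matrix n n ℝ) : entryCLM i j M = M i j := rfl

lemma hasDerivAt_pow_affine (A B : Matrix n n ℝ) (k : ℕ) (s : ℝ) :
    HasDerivAt (fun s : ℝ => (A + s • B) ^ k)
      (∑ l ∈ Finset.range k, (A + s • B) ^ l * B * (A + s • B) ^ (k - 1 - l)) s := by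
  induction k with
  | zero =>
    simp only [pow_zero, Finset.range_zero, Finset.sum_empty]
    exact hasDerivAt_const s _
  | succ k ih =>
    have h1 : HasDerivAt (fun s : ℝ => A + s • B) B s := by
      have := ((hasDerivAt_id s).smul_const B).const_add A
      rwa [one_smul] at this
    simp only [pow_succ, Nat.add_sub_cancel]
    rw [← sum_pow_step (A + s • B) B k]
    exact ih.mul h1
theorem hasDerivAt_mexp_entry (A B : Matrix n n ℝ) (i j : n) :
    HasDerivAt (fun s : ℝ => mexp (A + s • B) i j)
      (mexp (Matrix.fromBlocks A B 0 A) (Sum.inl i) (Sum.inr j)) 0 := by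
  set C : ℝ := ‖A‖ + ‖B‖ with hC
  have hC0 : 0 ≤ C := by positivity
  set g : ℕ → ℝ → ℝ := fun k s => ((k ! : ℝ)⁻¹ • (A + s • B) ^ k) i j with hg
  set g' : ℕ → ℝ → ℝ := fun k s =>
    ((k ! : ℝ)⁻¹ •
      ∑ l ∈ Finset.range k, (A + s • B) ^ l * B * (A + s • B) ^ (k - 1 - l)) i j with hg'
  set u : ℕ → ℝ := fun k => ‖B‖ * ((k : ℝ) * C ^ (k - 1) / k !) with hu_def
  -- summability of the bound
  have hu : Summable u := by
    rw [← summable_nat_add_iff 1]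
    have h := (Real.summable_pow_div_factorial C).mul_left ‖B‖
    refine h.congr fun k => ?_
    have hk : (k : ℝ) + 1 ≠ 0 := by positivity
    have hf : (k ! : ℝ) ≠ 0 := by exact_mod_cast k.factorial_ne_zero
    simp only [hu_def, Nat.add_sub_cancel, Nat.factorial_succ]
    push_cast
    field_simp
  -- each term has a derivative
  have hgd : ∀ (k : ℕ) (s : ℝ), HasDerivAt (g k) (g' k s) s := by
    intro k s
    have h := ((entryCLM i j).hasFDerivAt
        (x := (k ! : ℝ)⁻¹ • (A + s • B) ^ k)).comp_hasDerivAt s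
      ((hasDerivAt_pow_affine A B k s).const_smul ((k ! : ℝ)⁻¹))
    exact h
  -- bound on the derivatives on the unit ball
  have hbound : ∀ (k : ℕ) (s : ℝ), s ∈ Metric.ball (0 : ℝ) 1 → ‖g' k s‖ ≤ u k := by
    intro k s hs
    have hs1 : |s| ≤ 1 := le_of_lt (by simpa [Real.norm_eq_abs] using mem_ball_zero_iff.1 hs)
    have hM : ‖A + s • B‖ ≤ C := by
      refine (norm_add_le _ _).trans ?_
      have : ‖s • B‖ ≤ ‖B‖ := by
        rw [norm_smul, Real.norm_eq_abs]
        nlinarith [norm_nonneg B]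
      linarith
    have hterm : ∀ l ∈ Finset.range k,
        ‖(A + s • B) ^ l * B * (A + s • B) ^ (k - 1 - l)‖ ≤ C ^ (k - 1) * ‖B‖ := by
      intro l hl
      rw [Finset.mem_range] at hl
      have h1 : ‖(A + s • B) ^ l * B * (A + s • B) ^ (k - 1 - l)‖
          ≤ ‖(A + s • B)‖ ^ l * ‖B‖ * ‖(A + s • B)‖ ^ (k - 1 - l) := by
        refine (norm_mul_le _ _).trans ?_
        refine mul_le_mul ((norm_mul_le _ _).trans (mul_le_mul_of_nonneg_right
          (norm_pow_le _ l) (norm_nonneg _))) (norm_pow_le _ _) (norm_nonneg _) ?_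
        positivity
      refine h1.trans ?_
      have h2 : ‖A + s • B‖ ^ l * ‖B‖ * ‖A + s • B‖ ^ (k - 1 - l)
          ≤ C ^ l * ‖B‖ * C ^ (k - 1 - l) := by
        have := norm_nonneg (A + s • B)
        gcongr
      refine h2.trans (le_of_eq ?_)
      have h3 : C ^ l * C ^ (k - 1 - l) = C ^ (k - 1) := by
        rw [← pow_add]; congr 1; omega
      rw [← h3]; ring
    have hS : ‖∑ l ∈ Finset.range k, (A + s • B) ^ l * B * (A + s • B) ^ (k - 1 - l)‖
        ≤ (k : ℝ) * (C ^ (k - 1) * ‖B‖) := by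
      refine (norm_sum_le _ _).trans ?_
      calc ∑ l ∈ Finset.range k, ‖(A + s • B) ^ l * B * (A + s • B) ^ (k - 1 - l)‖
          ≤ ∑ _l ∈ Finset.range k, C ^ (k - 1) * ‖B‖ := Finset.sum_le_sum hterm
        _ = (k : ℝ) * (C ^ (k - 1) * ‖B‖) := by
            rw [Finset.sum_const, Finset.card_range, nsmul_eq_mul]
    have hkfac : (0 : ℝ) < k ! := by exact_mod_cast k.factorial_pos
    calc ‖g' k s‖
        = ‖((k ! : ℝ)⁻¹ •
            ∑ l ∈ Finset.range k, (A + s • B) ^ l * B * (A + s • B) ^ (k - 1 - l)) i j‖ := rfl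
      _ ≤ ‖(k ! : ℝ)⁻¹ •
            ∑ l ∈ Finset.range k, (A + s • B) ^ l * B * (A + s • B) ^ (k - 1 - l)‖ :=
          norm_entry_le _ i j
      _ = (k ! : ℝ)⁻¹ * ‖∑ l ∈ Finset.range k, (A + s • B) ^ l * B * (A + s • B) ^ (k - 1 - l)‖ := by
          rw [norm_smul, Real.norm_eq_abs, abs_of_nonneg (by positivity)]
      _ ≤ (k ! : ℝ)⁻¹ * ((k : ℝ) * (C ^ (k - 1) * ‖B‖)) := by
          exact mul_le_mul_of_nonneg_left hS (by positivity)
      _ = u k := by rw [hu_def]; field_simp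
  -- summability at the base point
  have hg0 : Summable fun k => g k 0 := by
    refine Summable.of_norm_bounded (g := fun k => ‖A‖ ^ k / k !)
      (by simpa [div_eq_mul_inv] using Real.summable_pow_div_factorial ‖A‖) fun k => ?_
    have hkfac : (0 : ℝ) < k ! := by exact_mod_cast k.factorial_pos
    calc ‖g k 0‖ = ‖((k ! : ℝ)⁻¹ • (A + (0 : ℝ) • B) ^ k) i j‖ := rfl
      _ ≤ ‖(k ! : ℝ)⁻¹ • (A + (0 : ℝ) • B) ^ k‖ := norm_entry_le _ i j
      _ = (k ! : ℝ)⁻¹ * ‖A ^ k‖ := by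
          rw [zero_smul, add_zero, norm_smul, Real.norm_eq_abs, abs_of_nonneg (by positivity)]
      _ ≤ (k ! : ℝ)⁻¹ * ‖A‖ ^ k := mul_le_mul_of_nonneg_left (norm_pow_le A k) (by positivity)
      _ = ‖A‖ ^ k / k ! := by rw [div_eq_mul_inv]; ring
  have hmem : (0 : ℝ) ∈ Metric.ball (0 : ℝ) 1 := Metric.mem_ball_self one_pos
  have main := hasDerivAt_tsum_of_isPreconnected hu Metric.isOpen_ball
    (convex_ball (0 : ℝ) 1).isPreconnected (fun k s _ => hgd k s) hbound hmem hg0 hmem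
  -- identify the function
  have hfun : (fun s : ℝ => mexp (A + s • B) i j) = fun z => ∑' k, g k z := by
    funext s
    have hsum : Summable fun k : ℕ => (k ! : ℝ)⁻¹ • (A + s • B) ^ k :=
      NormedSpace.expSeries_summable' (𝕂 := ℝ) (A + s • B)
    have h1 : mexp (A + s • B) = ∑' k : ℕ, (k ! : ℝ)⁻¹ • (A + s • B) ^ k :=
      congrFun (NormedSpace.exp_eq_tsum ℝ) (A + s • B)
    calc mexp (A + s • B) i j
        = entryCLM i j (∑' k : ℕ, (k ! : ℝ)⁻¹ • (A + s • B) ^ k) := by rw [← h1]; rfl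
      _ = ∑' k : ℕ, entryCLM i j ((k ! : ℝ)⁻¹ • (A + s • B) ^ k) :=
          ContinuousLinearMap.map_tsum _ hsum
      _ = ∑' k, g k s := rfl
  -- identify the derivative
  have hder : (∑' k, g' k 0) = mexp (Matrix.fromBlocks A B 0 A) (Sum.inl i) (Sum.inr j) := by
    have hsum : Summable fun k : ℕ => (k ! : ℝ)⁻¹ • (Matrix.fromBlocks A B 0 A) ^ k :=
      NormedSpace.expSeries_summable' (𝕂 := ℝ) _
    have h1 : mexp (Matrix.fromBlocks A B 0 A)
        = ∑' k : ℕ, (k ! : ℝ)⁻¹ • (Matrix.fromBlocks A B 0 A) ^ k :=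
      congrFun (NormedSpace.exp_eq_tsum ℝ) _
    have h2 : mexp (Matrix.fromBlocks A B 0 A) (Sum.inl i) (Sum.inr j)
        = ∑' k : ℕ, entryCLM (Sum.inl i) (Sum.inr j)
            ((k ! : ℝ)⁻¹ • (Matrix.fromBlocks A B 0 A) ^ k) := by
      calc mexp (Matrix.fromBlocks A B 0 A) (Sum.inl i) (Sum.inr j)
          = entryCLM (Sum.inl i) (Sum.inr j)
              (∑' k : ℕ, (k ! : ℝ)⁻¹ • (Matrix.fromBlocks A B 0 A) ^ k) := by rw [← h1]; rfl
        _ = _ := ContinuousLinearMap.map_tsum _ hsum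
    rw [h2]
    refine tsum_congr fun k => ?_
    simp only [hg', entryCLM_apply, fromBlocks_pow, Matrix.smul_apply,
      Matrix.fromBlocks_apply₁₂, zero_smul, add_zero]
  rw [hfun, ← hder]
  exact main

end
end ExpAux

lemma Dmat_apply_off {h : ℕ} (μ ν α β : Fin h) (hμν : μ ≠ ν) :
    Dmat α β μ ν = (if μ = α then (1:ℝ) else 0) * (if ν = β then (1:ℝ) else 0) := by
  have h2 : ¬(α = μ ∧ α = ν) := by rintro ⟨rfl, rfl⟩; exact hμν rfl
  rw [Dmat, Matrix.sub_apply, Matrix.single, Matrix.single,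
    Matrix.of_apply, Matrix.of_apply, if_neg h2]
  by_cases h3 : μ = α
  · subst h3
    by_cases h4 : ν = β
    · subst h4; simp
    · simp [h4, Ne.symm h4]
  · simp [h3, Ne.symm h3]

lemma Cγ_add_smul {h : ℕ} (μ ν α β : Fin h) (hμν : μ ≠ ν) (Q : Matrix (Fin h) (Fin h) ℝ)
    (s : ℝ) : Cγ μ ν (Q + s • Dmat α β) = Cγ μ ν Q + s • Dγ μ ν α β := by
  rw [Cγ, Cγ, Dγ, Matrix.fromBlocks_smul, smul_zero, Matrix.fromBlocks_add, add_zero,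
    Matrix.add_apply, Matrix.smul_apply, smul_eq_mul, Dmat_apply_off μ ν α β hμν, add_smul,
    mul_smul]


/-- Derivative of the closed-form expected number of jumps in the direction
`D = E_{αβ} − E_{αα}`. -/
theorem hasDerivAt_expected_jumps {h nn : ℕ} (Q : Matrix (Fin h) (Fin h) ℝ)
    (hQ : IsGenerator Q) (t : Fin (nn + 1) → ℝ) (ht : StrictMono t)
    (y : Fin (nn + 1) → Fin h)
    (hpos : ∀ s : Fin nn,
      0 < mexp ((t s.succ - t s.castSucc) • Q) (y s.castSucc) (y s.succ))
    (μ ν α β : Fin h) (hμν : μ ≠ ν) (hαβ : α ≠ β) :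
    HasDerivAt
      (fun s : ℝ => ∑ s' : Fin nn,
        (mexp ((t s'.succ - t s'.castSucc) • (Q + s • Dmat α β))
            (y s'.castSucc) (y s'.succ))⁻¹ *
          mexp ((t s'.succ - t s'.castSucc) • Cγ μ ν (Q + s • Dmat α β))
            (Sum.inl (y s'.castSucc)) (Sum.inr (y s'.succ)))
      (∑ s' : Fin nn,
        (-(((mexp ((t s'.succ - t s'.castSucc) • Q) (y s'.castSucc) (y s'.succ)) ^ 2)⁻¹) *
            mexp ((t s'.succ - t s'.castSucc) • Cη α β Q)
              (Sum.inl (y s'.castSucc)) (Sum.inr (y s'.succ)) *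
            mexp ((t s'.succ - t s'.castSucc) • Cγ μ ν Q)
              (Sum.inl (y s'.castSucc)) (Sum.inr (y s'.succ)) +
          (mexp ((t s'.succ - t s'.castSucc) • Q) (y s'.castSucc) (y s'.succ))⁻¹ *
            mexp ((t s'.succ - t s'.castSucc) • Cψ μ ν α β Q)
              (Sum.inl (Sum.inl (y s'.castSucc))) (Sum.inr (Sum.inr (y s'.succ)))))
      0 := by

  refine HasDerivAt.fun_sum fun s' _ => ?_
  set Δ : ℝ := t s'.succ - t s'.castSucc with hΔ
  set y1 := y s'.castSucc with hy1
  set y2 := y s'.succ with hy2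
  have hv : 0 < mexp (Δ • Q) y1 y2 := hpos s'
  have e1 : (fun s : ℝ => mexp (Δ • (Q + s • Dmat α β)) y1 y2)
      = fun s : ℝ => mexp (Δ • Q + s • (Δ • Dmat α β)) y1 y2 := by
    funext s; rw [smul_add, smul_comm]
  have h1 : HasDerivAt (fun s : ℝ => mexp (Δ • (Q + s • Dmat α β)) y1 y2)
      (mexp (Δ • Cη α β Q) (Sum.inl y1) (Sum.inr y2)) 0 := by
    rw [e1]
    have hd := ExpAux.hasDerivAt_mexp_entry (Δ • Q) (Δ • Dmat α β) y1 y2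
    have hblk : Matrix.fromBlocks (Δ • Q) (Δ • Dmat α β) 0 (Δ • Q) = Δ • Cη α β Q := by
      rw [Cη, Matrix.fromBlocks_smul, smul_zero]
    rwa [hblk] at hd
  have h1' : HasDerivAt (fun s : ℝ => (mexp (Δ • (Q + s • Dmat α β)) y1 y2)⁻¹)
      (-(mexp (Δ • Cη α β Q) (Sum.inl y1) (Sum.inr y2)) /
        (mexp (Δ • (Q + (0:ℝ) • Dmat α β)) y1 y2) ^ 2) 0 := by
    refine h1.inv ?_
    simpa using hv.ne'
  have e2 : (fun s : ℝ => mexp (Δ • Cγ μ ν (Q + s • Dmat α β)) (Sum.inl y1) (Sum.inr y2))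
      = fun s : ℝ => mexp (Δ • Cγ μ ν Q + s • (Δ • Dγ μ ν α β)) (Sum.inl y1) (Sum.inr y2) := by
    funext s; rw [Cγ_add_smul μ ν α β hμν Q s, smul_add, smul_comm]
  have h2 : HasDerivAt
      (fun s : ℝ => mexp (Δ • Cγ μ ν (Q + s • Dmat α β)) (Sum.inl y1) (Sum.inr y2))
      (mexp (Δ • Cψ μ ν α β Q) (Sum.inl (Sum.inl y1)) (Sum.inr (Sum.inr y2))) 0 := by
    rw [e2]
    have hd := ExpAux.hasDerivAt_mexp_entry (Δ • Cγ μ ν Q) (Δ • Dγ μ ν α β)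
      (Sum.inl y1) (Sum.inr y2)
    have hblk : Matrix.fromBlocks (Δ • Cγ μ ν Q) (Δ • Dγ μ ν α β) 0 (Δ • Cγ μ ν Q)
        = Δ • Cψ μ ν α β Q := by
      rw [Cψ, Matrix.fromBlocks_smul, smul_zero]
    rwa [hblk] at hd
  have hcomb := h1'.fun_mul h2
  convert hcomb using 1
  · rfl
  simp only [zero_smul, add_zero]
  ring
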